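/- (Random projection lemma, Rademacher case) There exists a constant C > 0, independent of m, k and ε, such that for every m, k ∈ ℕ with k ≥ 1, every ε ∈ (0,1), and every vector x ∈ ℝ^m, the probability, with respect to the product measure on k×m matrices P in which each entry is independently +1 or −1 with probability 1/2 each, of the event {(1−ε)·‖x‖ ≤ ‖T_P(x)‖ ≤ (1+ε)·‖x‖} is at least 1 − 2·exp(−C·ε²·k), where T_P(x) = (1/√k)·P·x. -/

import Mathlib

open MeasureTheory ProbabilityTheory ENNReal

/-- The product Rademacher measure on `k × m` matrices: each entry is independently `+1`
or `-1`, each with probability `1/2`. -/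
noncomputable def radMeasure (k m : ℕ) : Measure (Fin k → Fin m → ℝ) :=
  Measure.pi fun _ : Fin k => Measure.pi fun _ : Fin m =>
    (PMF.uniformOfFinset ({-1, 1} : Finset ℝ) (Finset.insert_nonempty _ _)).toMeasure

/-- The random linear map associated to a `k × m` matrix `P`: `T_P(x) = (1/√k) · P · x`. -/
noncomputable def TP {k m : ℕ} (P : Fin k → Fin m → ℝ)
    (x : EuclideanSpace ℝ (Fin m)) : EuclideanSpace ℝ (Fin k) :=
  (Real.sqrt k)⁻¹ • (EuclideanSpace.equiv (Fin k) ℝ).symm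
    ((Matrix.of P).mulVec (EuclideanSpace.equiv (Fin m) ℝ x))

open Finset
section Aux


/-- Odd double factorial: `D n = (2n-1)!! = 1·3·5⋯(2n-1)`. -/
def D : ℕ → ℕ
  | 0 => 0 + 1
  | n + 1 => (2 * n + 1) * D n

lemma D_mul (n : ℕ) : D n * (2 ^ n * n.factorial) = (2 * n).factorial := by
  induction n with
  | zero => simp [D]
  | succ n ih =>
    have h2 : 2 * (n + 1) = 2 * n + 1 + 1 := by ring
    rw [h2, Nat.factorial_succ, Nat.factorial_succ, Nat.factorial_succ]
    rw [show D (n+1) = (2*n+1) * D n from rfl, pow_succ]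
    calc (2 * n + 1) * D n * (2 ^ n * 2 * ((n + 1) * n.factorial))
        = (2 * n + 1 + 1) * ((2*n+1) * (D n * (2^n * n.factorial))) := by ring
      _ = (2 * n + 1 + 1) * ((2 * n + 1) * (2*n).factorial) := by rw [ih]

lemma two_pow_fact_le (j : ℕ) : 2 ^ j * j.factorial ≤ (2 * j).factorial := by
  induction j with
  | zero => simp
  | succ j ih =>
    have h2 : 2 * (j + 1) = 2 * j + 1 + 1 := by ring
    rw [h2, Nat.factorial_succ, Nat.factorial_succ, Nat.factorial_succ, pow_succ]
    calc 2 ^ j * 2 * ((j + 1) * j.factorial)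
        = (2 * (j+1)) * (2 ^ j * j.factorial) := by ring
      _ ≤ (2 * (j+1)) * (2*j).factorial := Nat.mul_le_mul_left _ ih
      _ ≤ ((2*j+1+1) * (2*j+1)) * (2*j).factorial := by
          apply Nat.mul_le_mul_right
          nlinarith
      _ = (2*j+1+1) * ((2*j+1) * (2*j).factorial) := by ring

lemma D_le (n : ℕ) : D n ≤ 2 ^ n * n.factorial := by
  induction n with
  | zero => simp [D]
  | succ n ih =>
    rw [show D (n+1) = (2*n+1) * D n from rfl, Nat.factorial_succ, pow_succ]
    calc (2*n+1) * D n ≤ (2*(n+1)) * (2^n * n.factorial) :=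
          Nat.mul_le_mul (by omega) ih
      _ = 2 ^ n * 2 * ((n + 1) * n.factorial) := by ring

lemma choose_D_le {n j : ℕ} (hj : j ≤ n) :
    (2 * n).choose (2 * j) * D (n - j) ≤ D n * n.choose j := by
  have h2j : 2 * j ≤ 2 * n := by omega
  have key : ((2 * n).choose (2 * j) * D (n - j)) * ((2*j).factorial * (2 ^ (n-j) * (n-j).factorial))
      ≤ (D n * n.choose j) * ((2*j).factorial * (2 ^ (n-j) * (n-j).factorial)) := by
    have e1 : ((2 * n).choose (2 * j) * D (n - j)) * ((2*j).factorial * (2 ^ (n-j) * (n-j).factorial))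
        = (2*n).choose (2*j) * (2*j).factorial * (D (n-j) * (2 ^ (n-j) * (n-j).factorial)) := by ring
    rw [e1, D_mul, show 2 * (n - j) = 2*n - 2*j by omega]
    have e2 : (2*n).choose (2*j) * (2*j).factorial * (2*n - 2*j).factorial = (2*n).factorial := by
      rw [mul_right_comm]
      rw [mul_right_comm]
      exact Nat.choose_mul_factorial_mul_factorial h2j
    rw [e2, ← D_mul n]
    -- goal: D n * (2^n * n!) ≤ D n * (n.choose j) * ((2j)! * (2^(n-j) * (n-j)!))
    have e3 : n.choose j * j.factorial * (n - j).factorial = n.factorial :=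
      Nat.choose_mul_factorial_mul_factorial hj
    have h4 : 2 ^ n * n.factorial ≤ n.choose j * ((2*j).factorial * (2 ^ (n-j) * (n-j).factorial)) := by
      calc 2 ^ n * n.factorial
          = 2 ^ n * (n.choose j * j.factorial * (n - j).factorial) := by rw [e3]
        _ = n.choose j * ((2 ^ j * j.factorial) * (2 ^ (n-j) * (n-j).factorial)) := by
            have : (2:ℕ) ^ j * 2 ^ (n - j) = 2 ^ n := by
              rw [← pow_add 2 j (n - j), show j + (n - j) = n by omega]
            calc 2 ^ n * (n.choose j * j.factorial * (n - j).factorial)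
                = (2 ^ j * 2 ^ (n-j)) * (n.choose j * j.factorial * (n - j).factorial) := by rw [this]
              _ = n.choose j * (2 ^ j * j.factorial * (2 ^ (n - j) * (n - j).factorial)) := by ring
        _ ≤ n.choose j * ((2*j).factorial * (2 ^ (n-j) * (n-j).factorial)) :=
            Nat.mul_le_mul_left _ (Nat.mul_le_mul_right _ (two_pow_fact_le j))
    calc D n * (2 ^ n * n.factorial)
        ≤ D n * (n.choose j * ((2*j).factorial * (2 ^ (n-j) * (n-j).factorial))) :=
          Nat.mul_le_mul_left _ h4
      _ = D n * n.choose j * ((2*j).factorial * (2 ^ (n-j) * (n-j).factorial)) := by ring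
  have hpos : 0 < (2*j).factorial * (2 ^ (n-j) * (n-j).factorial) :=
    Nat.mul_pos (Nat.factorial_pos _) (Nat.mul_pos (Nat.pow_pos (by norm_num)) (Nat.factorial_pos _))
  exact Nat.le_of_mul_le_mul_right key hpos

lemma sum_range_even_odd {M : Type*} [AddCommMonoid M] (f : ℕ → M) (n : ℕ) :
    ∑ p ∈ range (2 * n + 1), f p
      = ∑ j ∈ range (n + 1), f (2 * j) + ∑ j ∈ range n, f (2 * j + 1) := by
  induction n with
  | zero => simp
  | succ n ih =>
    rw [show 2 * (n+1) + 1 = (2*n+1) + 1 + 1 by ring, sum_range_succ, sum_range_succ, ih,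
      sum_range_succ (fun j => f (2*j)) (n+1), sum_range_succ (fun j => f (2*j+1)) n]
    simp only [show 2 * (n+1) = 2*n+1+1 by ring, show 2*n+1 = 2*n+1 from rfl]
    abel

noncomputable def sgn (v : Bool) : ℝ := if v then 1 else -1

lemma moment_le : ∀ (m : ℕ) (x : Fin m → ℝ) (n : ℕ),
    ∑ b : Fin m → Bool, (∑ j, sgn (b j) * x j) ^ (2 * n)
      ≤ 2 ^ m * (D n : ℝ) * (∑ j, x j ^ 2) ^ n
  | 0, x, n => by
      cases n with
      | zero => simp [D]
      | succ n =>
        have : (2 * (n+1)) ≠ 0 := by omega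
        simp [zero_pow this, zero_pow (Nat.succ_ne_zero n)]
  | (m+1), x, n => by
      set x' : Fin m → ℝ := fun j => x j.succ with hx'
      -- rewrite LHS as double sum
      have h1 : ∑ b : Fin (m+1) → Bool, (∑ j, sgn (b j) * x j) ^ (2 * n)
          = ∑ v : Bool, ∑ b' : Fin m → Bool,
              (sgn v * x 0 + ∑ j : Fin m, sgn (b' j) * x' j) ^ (2 * n) := by
        rw [← Equiv.sum_comp (Fin.consEquiv (fun _ : Fin (m+1) => Bool)) (fun b => (∑ j, sgn (b j) * x j) ^ (2 * n)),
          Fintype.sum_prod_type]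
        refine Finset.sum_congr rfl fun v _ => Finset.sum_congr rfl fun b' _ => ?_
        congr 1
        rw [Fin.sum_univ_succ]
        simp [Fin.consEquiv_apply, Fin.cons_zero, Fin.cons_succ, hx']
      rw [h1]
      -- expand with add_pow and swap sums
      have h2 : ∀ v : Bool, ∀ b' : Fin m → Bool,
          (sgn v * x 0 + ∑ j : Fin m, sgn (b' j) * x' j) ^ (2 * n)
            = ∑ p ∈ range (2 * n + 1),
                sgn v ^ p * (x 0 ^ p * ((∑ j : Fin m, sgn (b' j) * x' j) ^ (2*n - p)
                  * ((2*n).choose p : ℝ))) := by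
        intro v b'
        rw [add_pow]
        refine Finset.sum_congr rfl fun p _ => ?_
        rw [mul_pow]; ring
      have h3 : ∀ p, ∑ v : Bool, ∑ b' : Fin m → Bool,
          sgn v ^ p * (x 0 ^ p * ((∑ j : Fin m, sgn (b' j) * x' j) ^ (2*n - p)
            * ((2*n).choose p : ℝ)))
          = (1 + (-1:ℝ)^p) * (x 0 ^ p *
              ((∑ b' : Fin m → Bool, (∑ j : Fin m, sgn (b' j) * x' j) ^ (2*n - p))
                * ((2*n).choose p : ℝ))) := by
        intro p
        rw [Fintype.sum_bool]
        simp only [← Finset.mul_sum, ← Finset.sum_mul]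
        rw [show sgn true = 1 from rfl, show sgn false = -1 from rfl]
        ring
      set S : ℕ → ℝ := fun N => ∑ b' : Fin m → Bool, (∑ j : Fin m, sgn (b' j) * x' j) ^ N
        with hS
      have h4 : ∑ v : Bool, ∑ b' : Fin m → Bool,
          (sgn v * x 0 + ∑ j : Fin m, sgn (b' j) * x' j) ^ (2 * n)
          = ∑ p ∈ range (2*n+1), (1 + (-1:ℝ)^p) *
              (x 0 ^ p * (S (2*n - p) * ((2*n).choose p : ℝ))) := by
        simp only [h2]
        have step1 : ∀ v : Bool, (∑ b' : Fin m → Bool, ∑ p ∈ range (2*n+1),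
            sgn v ^ p * (x 0 ^ p * ((∑ j : Fin m, sgn (b' j) * x' j) ^ (2*n - p)
              * ((2*n).choose p : ℝ))))
            = ∑ p ∈ range (2*n+1), ∑ b' : Fin m → Bool,
            sgn v ^ p * (x 0 ^ p * ((∑ j : Fin m, sgn (b' j) * x' j) ^ (2*n - p)
              * ((2*n).choose p : ℝ))) := fun v => Finset.sum_comm
        simp only [step1]
        rw [Finset.sum_comm]
        exact Finset.sum_congr rfl fun p _ => h3 p
      rw [h4, sum_range_even_odd (fun p => (1 + (-1:ℝ)^p) *
          (x 0 ^ p * (S (2*n - p) * ((2*n).choose p : ℝ)))) n]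
      have hodd : ∑ j ∈ range n, (1 + (-1:ℝ)^(2*j+1)) *
          (x 0 ^ (2*j+1) * (S (2*n - (2*j+1)) * ((2*n).choose (2*j+1) : ℝ))) = 0 := by
        refine Finset.sum_eq_zero fun j _ => ?_
        have : ((-1:ℝ))^(2*j+1) = -1 := by
          rw [pow_succ, pow_mul]; norm_num
        rw [this]; ring
      rw [hodd, add_zero]
      have hxsum : ∑ j : Fin (m+1), x j ^ 2 = x 0 ^ 2 + ∑ j : Fin m, x' j ^ 2 :=
        Fin.sum_univ_succ _
      set s2 : ℝ := ∑ j : Fin m, x' j ^ 2 with hs2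
      have hs2nn : 0 ≤ s2 := Finset.sum_nonneg fun j _ => sq_nonneg _
      have key : ∀ j ∈ range (n+1),
          (1 + (-1:ℝ)^(2*j)) * (x 0 ^ (2*j) * (S (2*n - (2*j)) * ((2*n).choose (2*j) : ℝ)))
          ≤ 2 ^ (m+1) * (D n : ℝ) * ((x 0 ^ 2) ^ j * s2 ^ (n - j) * (n.choose j : ℝ)) := by
        intro j hj
        have hjn : j ≤ n := by
          simpa using Finset.mem_range_succ_iff.mp hj
        have hcoe : (1 + (-1:ℝ)^(2*j)) = 2 := by rw [pow_mul]; norm_num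
        have h2nj : 2*n - 2*j = 2*(n - j) := by omega
        have hSle : S (2*(n-j)) ≤ 2 ^ m * (D (n-j) : ℝ) * s2 ^ (n-j) :=
          moment_le m x' (n-j)
        have hSnn : (0:ℝ) ≤ S (2*(n-j)) := by
          rw [hS]
          exact Finset.sum_nonneg fun b' _ => (even_two_mul _).pow_nonneg _
        have hcast : ((2*n).choose (2*j) : ℝ) * (D (n-j) : ℝ) ≤ (D n : ℝ) * (n.choose j : ℝ) := by
          exact_mod_cast choose_D_le hjn
        have ha : (0:ℝ) ≤ (x 0 ^ 2) ^ j := by positivity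
        have hsp : (0:ℝ) ≤ s2 ^ (n-j) := pow_nonneg hs2nn _
        have hC2 : (0:ℝ) ≤ ((2*n).choose (2*j) : ℝ) := Nat.cast_nonneg _
        rw [hcoe, h2nj, pow_mul]
        calc 2 * ((x 0 ^ 2) ^ j * (S (2*(n-j)) * ((2*n).choose (2*j) : ℝ)))
            ≤ 2 * ((x 0 ^ 2) ^ j * ((2 ^ m * (D (n-j) : ℝ) * s2 ^ (n-j))
                * ((2*n).choose (2*j) : ℝ))) := by
              have := mul_le_mul_of_nonneg_right hSle hC2
              nlinarith [mul_le_mul_of_nonneg_left this ha]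
          _ = 2^(m+1) * ((x 0 ^ 2) ^ j * s2 ^ (n-j)) * (((2*n).choose (2*j) : ℝ) * (D (n-j) : ℝ)) := by
              ring
          _ ≤ 2^(m+1) * ((x 0 ^ 2) ^ j * s2 ^ (n-j)) * ((D n : ℝ) * (n.choose j : ℝ)) := by
              apply mul_le_mul_of_nonneg_left hcast
              exact mul_nonneg (by positivity) (mul_nonneg ha hsp)
          _ = 2 ^ (m+1) * (D n : ℝ) * ((x 0 ^ 2) ^ j * s2 ^ (n - j) * (n.choose j : ℝ)) := by
              ring
      calc ∑ j ∈ range (n+1), (1 + (-1:ℝ)^(2*j)) *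
            (x 0 ^ (2*j) * (S (2*n - (2*j)) * ((2*n).choose (2*j) : ℝ)))
          ≤ ∑ j ∈ range (n+1), 2 ^ (m+1) * (D n : ℝ) *
              ((x 0 ^ 2) ^ j * s2 ^ (n - j) * (n.choose j : ℝ)) :=
            Finset.sum_le_sum key
        _ = 2 ^ (m+1) * (D n : ℝ) * (x 0 ^ 2 + s2) ^ n := by
            rw [← Finset.mul_sum, add_pow]
        _ = 2 ^ (m+1) * (D n : ℝ) * (∑ j : Fin (m+1), x j ^ 2) ^ n := by
            rw [hxsum]

lemma card_fun_bool (m : ℕ) : (Fintype.card (Fin m → Bool) : ℝ) = 2 ^ m := by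
  simp [Fintype.card_fun]

lemma sq_moment_eq : ∀ (m : ℕ) (x : Fin m → ℝ),
    ∑ b : Fin m → Bool, (∑ j, sgn (b j) * x j) ^ 2 = 2 ^ m * ∑ j, x j ^ 2
  | 0, x => by simp
  | (m+1), x => by
      set x' : Fin m → ℝ := fun j => x j.succ with hx'
      have h1 : ∑ b : Fin (m+1) → Bool, (∑ j, sgn (b j) * x j) ^ 2
          = ∑ v : Bool, ∑ b' : Fin m → Bool,
              (sgn v * x 0 + ∑ j : Fin m, sgn (b' j) * x' j) ^ 2 := by
        rw [← Equiv.sum_comp (Fin.consEquiv (fun _ : Fin (m+1) => Bool))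
          (fun b => (∑ j, sgn (b j) * x j) ^ 2), Fintype.sum_prod_type]
        refine Finset.sum_congr rfl fun v _ => Finset.sum_congr rfl fun b' _ => ?_
        congr 1
        rw [Fin.sum_univ_succ]
        simp [Fin.consEquiv_apply, Fin.cons_zero, Fin.cons_succ, hx']
      rw [h1, Fintype.sum_bool]
      rw [show sgn true = 1 from rfl, show sgn false = -1 from rfl]
      rw [← Finset.sum_add_distrib]
      have h2 : ∀ b' : Fin m → Bool,
          (1 * x 0 + ∑ j : Fin m, sgn (b' j) * x' j) ^ 2
            + ((-1) * x 0 + ∑ j : Fin m, sgn (b' j) * x' j) ^ 2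
          = 2 * x 0 ^ 2 + 2 * (∑ j : Fin m, sgn (b' j) * x' j) ^ 2 := by
        intro b'; ring
      rw [Finset.sum_congr rfl fun b' _ => h2 b']
      rw [Finset.sum_add_distrib, Finset.sum_const, ← Finset.mul_sum,
        sq_moment_eq m x', Fin.sum_univ_succ (fun j => x j ^ 2)]
      have hc : ((Finset.univ : Finset (Fin m → Bool)).card : ℝ) = 2 ^ m := by
        rw [Finset.card_univ]; exact_mod_cast card_fun_bool m
      simp only [nsmul_eq_mul, hc, hx']
      ring

section MGF
variable {m : ℕ} (x : Fin m → ℝ)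

lemma exp_eq_tsum (z : ℝ) : Real.exp z = ∑' n : ℕ, z ^ n / n.factorial := by
  rw [Real.exp_eq_exp_ℝ, NormedSpace.exp_eq_tsum_div]

lemma mgf_upper {m : ℕ} (x : Fin m → ℝ) (l : ℝ) (hl : 0 ≤ l)
    (hq : 2 * l * (∑ j, x j ^ 2) ≤ 1/2) :
    ∑ b : Fin m → Bool, Real.exp (l * (∑ j, sgn (b j) * x j) ^ 2)
      ≤ 2 ^ m * Real.exp (l * (∑ j, x j ^ 2) + 8 * l^2 * (∑ j, x j ^ 2)^2) := by
  set s2 : ℝ := ∑ j, x j ^ 2 with hs2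
  have hs2nn : 0 ≤ s2 := Finset.sum_nonneg fun j _ => sq_nonneg _
  set q : ℝ := 2 * l * s2 with hqdef
  have hqnn : 0 ≤ q := by positivity
  have hq1 : q < 1 := lt_of_le_of_lt hq (by norm_num)
  set Y : (Fin m → Bool) → ℝ := fun b => ∑ j, sgn (b j) * x j with hY
  set t : ℕ → ℝ := fun n => ∑ b : Fin m → Bool, (l * Y b ^ 2) ^ n / n.factorial with ht
  have hsummand : ∀ b : Fin m → Bool, Summable (fun n => (l * Y b ^ 2) ^ n / n.factorial) :=
    fun b => Real.summable_pow_div_factorial _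
  have hswap : ∑ b : Fin m → Bool, Real.exp (l * Y b ^ 2) = ∑' n, t n := by
    rw [ht]
    simp only [exp_eq_tsum]
    exact (Summable.tsum_finsetSum (fun b _ => hsummand b)).symm
  have hts : Summable t := summable_sum (fun b _ => hsummand b)
  -- termwise bounds
  have hmom : ∀ n : ℕ, t n ≤ 2 ^ m * ((D n : ℝ) / n.factorial) * (l * s2) ^ n := by
    intro n
    have h1 : t n = (l ^ n / n.factorial) * ∑ b : Fin m → Bool, Y b ^ (2 * n) := by
      rw [ht, Finset.mul_sum]
      refine Finset.sum_congr rfl fun b _ => ?_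
      rw [mul_pow, pow_mul]
      ring
    rw [h1]
    have h2 : ∑ b : Fin m → Bool, Y b ^ (2*n) ≤ 2 ^ m * (D n : ℝ) * s2 ^ n :=
      moment_le m x n
    have h3 : (0:ℝ) ≤ l ^ n / n.factorial := by positivity
    calc (l ^ n / n.factorial) * ∑ b : Fin m → Bool, Y b ^ (2 * n)
        ≤ (l ^ n / n.factorial) * (2 ^ m * (D n : ℝ) * s2 ^ n) :=
          mul_le_mul_of_nonneg_left h2 h3
      _ = 2 ^ m * ((D n : ℝ) / n.factorial) * (l * s2) ^ n := by
          rw [mul_pow]; ring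
  have hDfact : ∀ n : ℕ, ((D n : ℝ) / n.factorial) ≤ 2 ^ n := by
    intro n
    rw [div_le_iff₀ (by positivity : (0:ℝ) < (n.factorial : ℝ))]
    exact_mod_cast D_le n
  have htn : ∀ n : ℕ, t n ≤ 2 ^ m * q ^ n := by
    intro n
    calc t n ≤ 2 ^ m * ((D n : ℝ) / n.factorial) * (l * s2) ^ n := hmom n
      _ ≤ 2 ^ m * 2 ^ n * (l * s2) ^ n := by
          apply mul_le_mul_of_nonneg_right _ (by positivity)
          exact mul_le_mul_of_nonneg_left (hDfact n) (by positivity)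
      _ = 2 ^ m * q ^ n := by
          rw [hqdef, show (2:ℝ) * l * s2 = 2 * (l * s2) by ring, mul_pow]; ring
  have ht0 : t 0 = 2 ^ m := by
    have h0 : t 0 = (Fintype.card (Fin m → Bool) : ℝ) := by simp [ht]
    rw [h0, card_fun_bool]
  have ht1 : t 1 ≤ 2 ^ m * (l * s2) := by
    have := hmom 1
    simpa [D] using this
  -- split the tsum
  have hsplit : ∑' n, t n = t 0 + (t 1 + ∑' n, t (n + 1 + 1)) := by
    rw [Summable.tsum_eq_zero_add hts, Summable.tsum_eq_zero_add ((summable_nat_add_iff 1).mpr hts)]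
  have htail : ∑' n, t (n + 1 + 1) ≤ 2 ^ m * (2 * q ^ 2) := by
    have hsum2 : Summable (fun n => t (n + 1 + 1)) := by
      have := (summable_nat_add_iff 2).mpr hts
      simpa [add_assoc] using this
    have hgeo : Summable (fun n : ℕ => 2 ^ m * q ^ (n + 1 + 1) : ℕ → ℝ) := by
      apply Summable.mul_left
      have : Summable (fun n : ℕ => q ^ n) := summable_geometric_of_lt_one hqnn hq1
      exact ((summable_nat_add_iff 2).mpr this).congr (fun n => by ring_nf)
    calc ∑' n, t (n + 1 + 1) ≤ ∑' n : ℕ, 2 ^ m * q ^ (n + 1 + 1) :=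
          Summable.tsum_le_tsum (fun n => htn (n+1+1)) hsum2 hgeo
      _ = 2 ^ m * (q ^ 2 * ∑' n : ℕ, q ^ n) := by
          rw [← tsum_mul_left, ← tsum_mul_left]
          congr 1; funext n; ring
      _ = 2 ^ m * (q ^ 2 * (1 - q)⁻¹) := by rw [tsum_geometric_of_lt_one hqnn hq1]
      _ ≤ 2 ^ m * (2 * q ^ 2) := by
          apply mul_le_mul_of_nonneg_left _ (by positivity)
          have h12 : (1:ℝ) - q ≥ 1/2 := by
            rw [hqdef]; linarith
          have : (1 - q)⁻¹ ≤ 2 := by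
            rw [inv_le_iff_one_le_mul₀ (by linarith)]
            linarith
          nlinarith [sq_nonneg q]
  have hfinal : ∑' n, t n ≤ 2 ^ m * (1 + (l * s2 + 8 * l^2 * s2^2)) := by
    rw [hsplit, ht0]
    have hq2 : 2 * q ^ 2 = 8 * l^2 * s2^2 := by rw [hqdef]; ring
    rw [hq2] at htail
    have hrhs : (2:ℝ) ^ m * (1 + (l * s2 + 8 * l^2 * s2^2))
        = 2 ^ m + (2 ^ m * (l * s2) + 2 ^ m * (8 * l^2 * s2^2)) := by ring
    rw [hrhs]
    linarith [ht1, htail]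
  calc ∑ b : Fin m → Bool, Real.exp (l * Y b ^ 2) = ∑' n, t n := hswap
    _ ≤ 2 ^ m * (1 + (l * s2 + 8 * l^2 * s2^2)) := hfinal
    _ ≤ 2 ^ m * Real.exp (l * s2 + 8 * l^2 * s2^2) := by
        apply mul_le_mul_of_nonneg_left _ (by positivity)
        have := Real.add_one_le_exp (l * s2 + 8 * l^2 * s2^2)
        linarith

lemma exp_neg_le (u : ℝ) (hu : 0 ≤ u) : Real.exp (-u) ≤ 1 - u + u ^ 2 := by
  have h1 : Real.exp (-u) * Real.exp u = 1 := by
    rw [← Real.exp_add]; simp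
  have h2 : 1 + u ≤ Real.exp u := by linarith [Real.add_one_le_exp u]
  have h3 : 0 < Real.exp (-u) := Real.exp_pos _
  nlinarith [mul_le_mul_of_nonneg_left h2 (le_of_lt h3), pow_nonneg hu 3, sq_nonneg u,
    mul_nonneg (mul_nonneg hu hu) hu]

lemma mgf_lower {m : ℕ} (x : Fin m → ℝ) (l : ℝ) (hl : 0 ≤ l) :
    ∑ b : Fin m → Bool, Real.exp (-(l * (∑ j, sgn (b j) * x j) ^ 2))
      ≤ 2 ^ m * Real.exp (-(l * (∑ j, x j ^ 2)) + 3 * l^2 * (∑ j, x j ^ 2)^2) := by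
  set s2 : ℝ := ∑ j, x j ^ 2 with hs2
  have hs2nn : 0 ≤ s2 := Finset.sum_nonneg fun j _ => sq_nonneg _
  set Y : (Fin m → Bool) → ℝ := fun b => ∑ j, sgn (b j) * x j with hY
  have hpt : ∀ b : Fin m → Bool, Real.exp (-(l * Y b ^ 2))
      ≤ 1 - l * Y b ^ 2 + l ^ 2 * (Y b ^ 2) ^ 2 := by
    intro b
    have hu : 0 ≤ l * Y b ^ 2 := by positivity
    have := exp_neg_le (l * Y b ^ 2) hu
    calc Real.exp (-(l * Y b ^ 2)) ≤ 1 - l * Y b ^ 2 + (l * Y b ^ 2) ^ 2 := this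
      _ = 1 - l * Y b ^ 2 + l ^ 2 * (Y b ^ 2) ^ 2 := by ring
  have hsum : ∑ b : Fin m → Bool, Real.exp (-(l * Y b ^ 2))
      ≤ ∑ b : Fin m → Bool, (1 - l * Y b ^ 2 + l ^ 2 * (Y b ^ 2) ^ 2) :=
    Finset.sum_le_sum fun b _ => hpt b
  have hY4 : ∑ b : Fin m → Bool, (Y b ^ 2) ^ 2 ≤ 2 ^ m * 3 * s2 ^ 2 := by
    have := moment_le m x 2
    have h4 : ∀ b : Fin m → Bool, (Y b ^ 2) ^ 2 = Y b ^ (2 * 2) := fun b => by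
      rw [← pow_mul]
    rw [Finset.sum_congr rfl fun b _ => h4 b]
    calc ∑ b : Fin m → Bool, Y b ^ (2*2) ≤ 2 ^ m * (D 2 : ℝ) * s2 ^ 2 := this
      _ = 2 ^ m * 3 * s2 ^ 2 := by norm_num [D]
  have hY2 : ∑ b : Fin m → Bool, Y b ^ 2 = 2 ^ m * s2 := sq_moment_eq m x
  have hexp : ∑ b : Fin m → Bool, (1 - l * Y b ^ 2 + l ^ 2 * (Y b ^ 2) ^ 2)
      ≤ 2 ^ m * (1 + (-(l * s2) + 3 * l ^ 2 * s2 ^ 2)) := by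
    rw [Finset.sum_add_distrib, Finset.sum_sub_distrib, Finset.sum_const, ← Finset.mul_sum,
      ← Finset.mul_sum, hY2]
    have : (Fintype.card (Fin m → Bool) : ℝ) = 2 ^ m := card_fun_bool m
    simp only [nsmul_eq_mul, Finset.card_univ, this, mul_one]
    nlinarith [hY4, sq_nonneg l]
  calc ∑ b : Fin m → Bool, Real.exp (-(l * Y b ^ 2))
      ≤ 2 ^ m * (1 + (-(l * s2) + 3 * l ^ 2 * s2 ^ 2)) := le_trans hsum hexp
    _ ≤ 2 ^ m * Real.exp (-(l * s2) + 3 * l ^ 2 * s2 ^ 2) := by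
        apply mul_le_mul_of_nonneg_left _ (by positivity)
        linarith [Real.add_one_le_exp (-(l * s2) + 3 * l ^ 2 * s2 ^ 2)]
end MGF

end Aux

section Meas
lemma pi_atomic {ι α β : Type*} [Fintype ι] [DecidableEq ι] [MeasurableSpace α] [Fintype β]
    (g : β → α) (c : ℝ≥0∞) (μ0 : Measure α) [SigmaFinite μ0]
    (h : μ0 = c • ∑ v : β, Measure.dirac (g v)) :
    Measure.pi (fun _ : ι => μ0)
      = (c ^ Fintype.card ι) • ∑ f : ι → β, Measure.dirac (g ∘ f) := by
  classical
  apply Measure.pi_eq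
  intro s hs
  have hbox : MeasurableSet (Set.univ.pi s) := MeasurableSet.univ_pi hs
  rw [Measure.smul_apply]
  rw [show ((∑ f : ι → β, Measure.dirac (g ∘ f)) (Set.univ.pi s))
      = ∑ f : ι → β, (Measure.dirac (g ∘ f)) (Set.univ.pi s) by
    rw [Measure.coe_finset_sum]; simp]
  have hdir : ∀ f : ι → β, (Measure.dirac (g ∘ f) : Measure (ι → α)) (Set.univ.pi s)
      = ∏ i : ι, (if g (f i) ∈ s i then (1:ℝ≥0∞) else 0) := by
    intro f
    rw [Measure.dirac_apply' _ hbox, Finset.prod_boole]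
    have hmem : (g ∘ f) ∈ Set.univ.pi s ↔ ∀ i ∈ Finset.univ, g (f i) ∈ s i := by
      simp [Set.mem_univ_pi, Function.comp]
    by_cases hf : (g ∘ f) ∈ Set.univ.pi s
    · rw [Set.indicator_of_mem hf, if_pos (hmem.mp hf)]; rfl
    · rw [Set.indicator_of_notMem hf, if_neg (fun hc => hf (hmem.mpr hc))]
  simp only [hdir]
  have hcomp : ∀ i : ι, μ0 (s i) = c * ∑ v : β, (if g v ∈ s i then (1:ℝ≥0∞) else 0) := by
    intro i
    rw [h, Measure.smul_apply]
    rw [show ((∑ v : β, Measure.dirac (g v)) (s i)) = ∑ v : β, (Measure.dirac (g v)) (s i) by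
      rw [Measure.coe_finset_sum]; simp]
    rw [smul_eq_mul]
    congr 1
    refine Finset.sum_congr rfl fun v _ => ?_
    rw [Measure.dirac_apply' _ (hs i)]
    by_cases hv : g v ∈ s i
    · rw [Set.indicator_of_mem hv, if_pos hv]; rfl
    · rw [Set.indicator_of_notMem hv, if_neg hv]
  have hrhs : ∏ i : ι, μ0 (s i)
      = c ^ Fintype.card ι * ∏ i : ι, ∑ v : β, (if g v ∈ s i then (1:ℝ≥0∞) else 0) := by
    simp only [hcomp]
    rw [Finset.prod_mul_distrib, Finset.prod_const, Finset.card_univ]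
  rw [hrhs, Finset.prod_univ_sum (fun _ => (Finset.univ : Finset β))
    (fun i v => if g v ∈ s i then (1:ℝ≥0∞) else 0), Fintype.piFinset_univ, smul_eq_mul]

open scoped Classical in
lemma pmf_eq :
    ((PMF.uniformOfFinset ({-1, 1} : Finset ℝ) (Finset.insert_nonempty _ _)).toMeasure
      : Measure ℝ)
      = (2:ℝ≥0∞)⁻¹ • ∑ v : Bool, Measure.dirac (sgn v) := by
  have hne : (-1 : ℝ) ≠ 1 := by norm_num
  have hcard : ({-1, 1} : Finset ℝ).card = 2 := by
    rw [Finset.card_insert_of_notMem (by simp [hne]), Finset.card_singleton]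
  ext A hA
  rw [PMF.toMeasure_apply (hs := hA)]
  have hsupp : ∀ y : ℝ, y ∉ ({-1, 1} : Finset ℝ) →
      A.indicator (⇑(PMF.uniformOfFinset ({-1, 1} : Finset ℝ) (Finset.insert_nonempty _ _))) y
        = 0 := by
    intro y hy
    rw [Set.indicator_apply]
    split_ifs with hyA
    · rw [PMF.uniformOfFinset_apply]
      rw [if_neg hy]
    · rfl
  rw [tsum_eq_sum hsupp]
  rw [Measure.smul_apply]
  rw [show ((∑ v : Bool, Measure.dirac (sgn v)) A) = ∑ v : Bool, (Measure.dirac (sgn v)) A by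
    rw [Measure.coe_finset_sum]; simp]
  rw [Fintype.sum_bool]
  rw [Finset.sum_insert (by simp [hne]), Finset.sum_singleton]
  rw [Measure.dirac_apply' _ hA, Measure.dirac_apply' _ hA]
  have hval : ∀ y : ℝ, y ∈ ({-1, 1} : Finset ℝ) →
      A.indicator (⇑(PMF.uniformOfFinset ({-1, 1} : Finset ℝ) (Finset.insert_nonempty _ _))) y
        = if y ∈ A then (2:ℝ≥0∞)⁻¹ else 0 := by
    intro y hy
    rw [Set.indicator_apply]
    split_ifs with hyA
    · rw [PMF.uniformOfFinset_apply, if_pos hy, hcard]; norm_num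
    · rfl
  rw [hval _ (by simp), hval _ (by simp)]
  rw [show sgn true = 1 from rfl, show sgn false = -1 from rfl]
  rw [smul_eq_mul, mul_add]
  rw [Set.indicator_apply, Set.indicator_apply]
  split_ifs <;> simp <;> ring

lemma radMeasure_eq (k m : ℕ) :
    radMeasure k m = ((2:ℝ≥0∞)⁻¹ ^ m) ^ k •
      ∑ B : Fin k → Fin m → Bool, Measure.dirac (fun i j => sgn (B i j)) := by
  have hinner : (Measure.pi fun _ : Fin m =>
      (PMF.uniformOfFinset ({-1, 1} : Finset ℝ) (Finset.insert_nonempty _ _)).toMeasure)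
      = ((2:ℝ≥0∞)⁻¹ ^ m) • ∑ b : Fin m → Bool, Measure.dirac (sgn ∘ b) := by
    have := pi_atomic (ι := Fin m) (g := sgn) (c := (2:ℝ≥0∞)⁻¹)
      ((PMF.uniformOfFinset ({-1, 1} : Finset ℝ) (Finset.insert_nonempty _ _)).toMeasure)
      pmf_eq
    simpa [Fintype.card_fin] using this
  have houter := pi_atomic (ι := Fin k) (g := fun b : Fin m → Bool => (sgn ∘ b))
    (c := (2:ℝ≥0∞)⁻¹ ^ m)
    (Measure.pi fun _ : Fin m =>
      (PMF.uniformOfFinset ({-1, 1} : Finset ℝ) (Finset.insert_nonempty _ _)).toMeasure)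
    hinner
  rw [radMeasure, houter]
  simp only [Fintype.card_fin]
  rfl

open scoped Classical in
lemma radMeasure_apply {k m : ℕ} {A : Set (Fin k → Fin m → ℝ)} (hA : MeasurableSet A) :
    radMeasure k m A = ((2:ℝ≥0∞)⁻¹ ^ (m * k)) *
      ((Finset.univ.filter (fun B : Fin k → Fin m → Bool =>
        (fun i j => sgn (B i j)) ∈ A)).card : ℝ≥0∞) := by
  classical
  rw [radMeasure_eq, Measure.smul_apply]
  rw [show ((∑ B : Fin k → Fin m → Bool, Measure.dirac (fun i j => sgn (B i j))) A)
      = ∑ B : Fin k → Fin m → Bool, (Measure.dirac (fun i j => sgn (B i j))) A by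
    rw [Measure.coe_finset_sum]; simp]
  rw [smul_eq_mul, ← pow_mul]
  congr 1
  rw [← Finset.sum_boole]
  refine Finset.sum_congr rfl fun B _ => ?_
  rw [Measure.dirac_apply' _ hA, Set.indicator_apply]
  split_ifs <;> rfl

lemma chernoff_count_ge {γ : Type*} [Fintype γ] (f : γ → ℝ) (a l : ℝ) (hl : 0 ≤ l)
    [DecidablePred (fun y : γ => a ≤ f y)] :
    ((Finset.univ.filter (fun y : γ => a ≤ f y)).card : ℝ) * Real.exp (l * a)
      ≤ ∑ y : γ, Real.exp (l * f y) := by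
  classical
  calc ((Finset.univ.filter (fun y : γ => a ≤ f y)).card : ℝ) * Real.exp (l * a)
      = ∑ _y ∈ Finset.univ.filter (fun y : γ => a ≤ f y), Real.exp (l * a) := by
        rw [Finset.sum_const, nsmul_eq_mul]
    _ ≤ ∑ y ∈ Finset.univ.filter (fun y : γ => a ≤ f y), Real.exp (l * f y) := by
        refine Finset.sum_le_sum fun y hy => ?_
        have := (Finset.mem_filter.mp hy).2
        exact Real.exp_le_exp.mpr (mul_le_mul_of_nonneg_left this hl)
    _ ≤ ∑ y : γ, Real.exp (l * f y) :=
        Finset.sum_le_sum_of_subset_of_nonneg (Finset.filter_subset _ _)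
          (fun y _ _ => (Real.exp_pos _).le)

lemma chernoff_count_le {γ : Type*} [Fintype γ] (f : γ → ℝ) (a l : ℝ) (hl : 0 ≤ l)
    [DecidablePred (fun y : γ => f y ≤ a)] :
    ((Finset.univ.filter (fun y : γ => f y ≤ a)).card : ℝ) * Real.exp (-(l * a))
      ≤ ∑ y : γ, Real.exp (-(l * f y)) := by
  classical
  calc ((Finset.univ.filter (fun y : γ => f y ≤ a)).card : ℝ) * Real.exp (-(l * a))
      = ∑ _y ∈ Finset.univ.filter (fun y : γ => f y ≤ a), Real.exp (-(l * a)) := by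
        rw [Finset.sum_const, nsmul_eq_mul]
    _ ≤ ∑ y ∈ Finset.univ.filter (fun y : γ => f y ≤ a), Real.exp (-(l * f y)) := by
        refine Finset.sum_le_sum fun y hy => ?_
        have := (Finset.mem_filter.mp hy).2
        have h2 : l * f y ≤ l * a := mul_le_mul_of_nonneg_left this hl
        exact Real.exp_le_exp.mpr (by linarith)
    _ ≤ ∑ y : γ, Real.exp (-(l * f y)) :=
        Finset.sum_le_sum_of_subset_of_nonneg (Finset.filter_subset _ _)
          (fun y _ _ => (Real.exp_pos _).le)

lemma sum_prod_pow {k : ℕ} {γ : Type*} [Fintype γ] (g : γ → ℝ) :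
    ∑ B : Fin k → γ, ∏ i, g (B i) = (∑ v : γ, g v) ^ k := by
  classical
  rw [show ((∑ v : γ, g v) ^ k) = ∏ _i : Fin k, (∑ v : γ, g v) by
    rw [Finset.prod_const, Finset.card_univ, Fintype.card_fin]]
  rw [Finset.prod_univ_sum (fun _ => (Finset.univ : Finset γ)) (fun _ v => g v)]
  rw [Fintype.piFinset_univ]

end Meas

theorem random_projection_lemma_rademacher :
    ∃ C : ℝ, C > 0 ∧
      ∀ m k : ℕ, 1 ≤ k →
        ∀ ε : ℝ, ε ∈ Set.Ioo (0 : ℝ) 1 →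
          ∀ x : EuclideanSpace ℝ (Fin m),
            radMeasure k m
                {P | (1 - ε) * ‖x‖ ≤ ‖TP P x‖ ∧ ‖TP P x‖ ≤ (1 + ε) * ‖x‖} ≥
              ENNReal.ofReal (1 - 2 * Real.exp (-C * ε ^ 2 * k)) := by
  classical
  refine ⟨1/32, by norm_num, fun m k hk ε hε x => ?_⟩
  obtain ⟨hε0, hε1⟩ := hε
  haveI hprob : IsProbabilityMeasure (radMeasure k m) := by
    unfold radMeasure; infer_instance
  set X : Fin m → ℝ := fun j => x j with hX
  set σ2 : ℝ := ∑ j, X j ^ 2 with hσ2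
  have hσnn : 0 ≤ σ2 := Finset.sum_nonneg fun j _ => sq_nonneg _
  set F : (Fin k → Fin m → ℝ) → ℝ := fun P => ∑ i, (∑ j, P i j * X j) ^ 2 with hF
  have hFnn : ∀ P, 0 ≤ F P := fun P => Finset.sum_nonneg fun i _ => sq_nonneg _
  have hFmeas : Measurable F := by
    apply Finset.measurable_sum
    intro i _
    apply Measurable.pow_const
    apply Finset.measurable_sum
    intro j _
    exact ((measurable_pi_apply i).comp measurable_id).eval.mul_const _
  have hnorm : ∀ P : Fin k → Fin m → ℝ, ‖TP P x‖ = (Real.sqrt k)⁻¹ * Real.sqrt (F P) := by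
    intro P
    rw [TP, norm_smul]
    congr 1
    · simp [Real.sqrt_nonneg, abs_of_nonneg]
    · rw [EuclideanSpace.norm_eq]
      congr 1
      refine Finset.sum_congr rfl fun i _ => ?_
      rw [Real.norm_eq_abs, sq_abs]
      congr 1
  have hxnorm : ‖x‖ = Real.sqrt σ2 := by
    rw [EuclideanSpace.norm_eq, hσ2]
    congr 1
    exact Finset.sum_congr rfl fun j _ => by rw [Real.norm_eq_abs, sq_abs]
  set Gs : Set (Fin k → Fin m → ℝ) :=
    {P | (1 - ε) * ‖x‖ ≤ ‖TP P x‖ ∧ ‖TP P x‖ ≤ (1 + ε) * ‖x‖} with hGs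
  have hkpos : (0:ℝ) < k := by exact_mod_cast hk
  have hsqk : (0:ℝ) < Real.sqrt k := Real.sqrt_pos.mpr hkpos
  set e : ℝ := Real.exp (-(1/32) * ε ^ 2 * k) with he
  have hepos : 0 < e := Real.exp_pos _
  by_cases hσ0 : σ2 = 0
  · -- degenerate case x = 0
    have hX0 : ∀ j, X j = 0 := by
      intro j
      have h2 := (Finset.sum_eq_zero_iff_of_nonneg (fun j _ => sq_nonneg (X j))).mp
        (by rw [← hσ2]; exact hσ0)
      exact pow_eq_zero_iff (two_ne_zero) |>.mp (h2 j (Finset.mem_univ j))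
    have hGuniv : Gs = Set.univ := by
      apply Set.eq_univ_of_forall
      intro P
      have hFP : F P = 0 := by
        rw [hF]
        apply Finset.sum_eq_zero
        intro i _
        rw [Finset.sum_eq_zero fun j _ => by rw [hX0 j, mul_zero]]
        norm_num
      have h1 : ‖TP P x‖ = 0 := by rw [hnorm P, hFP, Real.sqrt_zero, mul_zero]
      have h2 : ‖x‖ = 0 := by rw [hxnorm, hσ0, Real.sqrt_zero]
      constructor <;> rw [h1, h2] <;> simp
    rw [hGuniv, measure_univ]
    calc ENNReal.ofReal (1 - 2 * Real.exp (-(1/32) * ε ^ 2 * k)) ≤ ENNReal.ofReal 1 :=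
          ENNReal.ofReal_le_ofReal (by nlinarith [Real.exp_pos (-(1/32) * ε ^ 2 * k)])
      _ = 1 := ENNReal.ofReal_one
  · have hσpos : 0 < σ2 := lt_of_le_of_ne hσnn (Ne.symm hσ0)
    set AU : Set (Fin k → Fin m → ℝ) := {P | (1 + ε) * σ2 * k ≤ F P} with hAU
    set AL : Set (Fin k → Fin m → ℝ) := {P | F P ≤ (1 - ε) * σ2 * k} with hAL
    have hAUmeas : MeasurableSet AU := measurableSet_le measurable_const hFmeas
    have hALmeas : MeasurableSet AL := measurableSet_le hFmeas measurable_const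
    have hGmeas : MeasurableSet Gs := by
      have hgeq : Gs = {P | (1 - ε) * ‖x‖ ≤ (Real.sqrt k)⁻¹ * Real.sqrt (F P)}
          ∩ {P | (Real.sqrt k)⁻¹ * Real.sqrt (F P) ≤ (1 + ε) * ‖x‖} := by
        ext P
        simp only [hGs, Set.mem_setOf_eq, Set.mem_inter_iff, hnorm P]
      rw [hgeq]
      have hm : Measurable fun P => (Real.sqrt k)⁻¹ * Real.sqrt (F P) :=
        (Real.continuous_sqrt.measurable.comp hFmeas).const_mul _
      exact (measurableSet_le measurable_const hm).inter (measurableSet_le hm measurable_const)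
    have hincl : Gsᶜ ⊆ AU ∪ AL := by
      intro P hP
      by_contra hcon
      simp only [Set.mem_union, hAU, hAL, Set.mem_setOf_eq, not_or, not_le] at hcon
      obtain ⟨hU, hL⟩ := hcon
      apply hP
      have h1ε : 0 ≤ 1 - ε := by linarith
      have hlow : (1 - ε) * ‖x‖ ≤ ‖TP P x‖ := by
        rw [hnorm P, hxnorm]
        rw [mul_comm ((Real.sqrt k)⁻¹) _, ← div_eq_mul_inv, le_div_iff₀ hsqk]
        have hle : (1 - ε)^2 * (σ2 * k) ≤ F P := by nlinarith
        calc (1 - ε) * Real.sqrt σ2 * Real.sqrt k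
            = Real.sqrt ((1 - ε)^2 * (σ2 * k)) := by
              rw [Real.sqrt_mul (by positivity), Real.sqrt_sq h1ε,
                Real.sqrt_mul hσnn, mul_assoc]
          _ ≤ Real.sqrt (F P) := Real.sqrt_le_sqrt hle
      have hup : ‖TP P x‖ ≤ (1 + ε) * ‖x‖ := by
        rw [hnorm P, hxnorm]
        rw [mul_comm ((Real.sqrt k)⁻¹) _, ← div_eq_mul_inv, div_le_iff₀ hsqk]
        have hle : F P ≤ (1 + ε)^2 * (σ2 * k) := by nlinarith
        calc Real.sqrt (F P) ≤ Real.sqrt ((1 + ε)^2 * (σ2 * k)) := Real.sqrt_le_sqrt hle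
          _ = (1 + ε) * Real.sqrt σ2 * Real.sqrt k := by
              rw [Real.sqrt_mul (by positivity), Real.sqrt_sq (by linarith),
                Real.sqrt_mul hσnn, mul_assoc]
      exact ⟨hlow, hup⟩
    set S : (Fin k → Fin m → Bool) → ℝ := fun B => ∑ i, (∑ j, sgn (B i j) * X j) ^ 2 with hS
    -- generic step: convert a counting bound into a measure bound
    have measure_bound : ∀ (A : Set (Fin k → Fin m → ℝ)) (hA : MeasurableSet A)
        (hcard : ((Finset.univ.filter (fun B : Fin k → Fin m → Bool =>
          (fun i j => sgn (B i j)) ∈ A)).card : ℝ) ≤ 2 ^ (m * k) * e),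
        radMeasure k m A ≤ ENNReal.ofReal e := by
      intro A hA hcard
      rw [radMeasure_apply hA]
      set N := (Finset.univ.filter (fun B : Fin k → Fin m → Bool =>
        (fun i j => sgn (B i j)) ∈ A)).card with hN
      have h2inv : ((2:ℝ≥0∞)⁻¹ ^ (m * k)) = ENNReal.ofReal ((2:ℝ)⁻¹ ^ (m * k)) := by
        rw [ENNReal.ofReal_pow (by norm_num)]
        congr 1
        rw [ENNReal.ofReal_inv_of_pos (by norm_num)]
        norm_num
      rw [h2inv, show ((N : ℝ≥0∞)) = ENNReal.ofReal (N : ℝ) by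
        rw [ENNReal.ofReal_natCast], ← ENNReal.ofReal_mul (by positivity)]
      apply ENNReal.ofReal_le_ofReal
      have hfac : (2:ℝ)⁻¹ ^ (m * k) * (2 ^ (m * k) * e) = e := by
        rw [← mul_assoc, ← mul_pow]
        norm_num
      calc (2:ℝ)⁻¹ ^ (m * k) * (N : ℝ) ≤ (2:ℝ)⁻¹ ^ (m * k) * (2 ^ (m * k) * e) :=
            mul_le_mul_of_nonneg_left hcard (by positivity)
        _ = e := hfac
    -- upper tail
    have hMU : radMeasure k m AU ≤ ENNReal.ofReal e := by
      set l : ℝ := ε / (16 * σ2) with hl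
      have hlpos : 0 < l := by positivity
      have hlσ : l * σ2 = ε / 16 := by rw [hl]; field_simp
      have hq : 2 * l * (∑ j, X j ^ 2) ≤ 1/2 := by
        rw [← hσ2]
        have : 2 * l * σ2 = ε / 8 := by rw [mul_assoc, hlσ]; ring
        rw [this]; linarith
      have hmgf := mgf_upper X l hlpos.le hq
      rw [← hσ2] at hmgf
      have hcount := chernoff_count_ge (f := S) (a := (1 + ε) * σ2 * k) l hlpos.le
      have hfact : ∑ B : Fin k → Fin m → Bool, Real.exp (l * S B)
          = (∑ b : Fin m → Bool, Real.exp (l * (∑ j, sgn (b j) * X j) ^ 2)) ^ k := by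
        rw [← sum_prod_pow]
        refine Finset.sum_congr rfl fun B _ => ?_
        rw [hS, Finset.mul_sum, Real.exp_sum]
      have hpow : (∑ b : Fin m → Bool, Real.exp (l * (∑ j, sgn (b j) * X j) ^ 2)) ^ k
          ≤ (2 ^ m * Real.exp (l * σ2 + 8 * l^2 * σ2^2)) ^ k :=
        pow_le_pow_left₀ (Finset.sum_nonneg fun b _ => (Real.exp_pos _).le) hmgf k
      have h1 := le_trans hcount (le_trans (le_of_eq hfact) hpow)
      have h2 : ((2:ℝ) ^ m * Real.exp (l * σ2 + 8 * l^2 * σ2^2)) ^ k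
          = 2 ^ (m * k) * Real.exp ((k : ℝ) * (l * σ2 + 8 * l^2 * σ2^2)) := by
        rw [mul_pow, ← pow_mul, ← Real.exp_nat_mul]
      rw [h2] at h1
      have h3 : Real.exp ((k:ℝ) * (l * σ2 + 8 * l^2 * σ2^2))
          = e * Real.exp (l * ((1 + ε) * σ2 * k)) := by
        rw [he, ← Real.exp_add]
        congr 1
        have hl2 : 8 * l ^ 2 * σ2 ^ 2 = ε ^ 2 / 32 := by
          rw [hl]; field_simp; ring
        have hl3 : l * ((1 + ε) * σ2 * (k:ℝ)) = ε / 16 * ((1 + ε) * k) := by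
          rw [hl]; field_simp
        rw [hlσ, hl2, hl3]
        ring
      rw [h3, show (2:ℝ) ^ (m*k) * (e * Real.exp (l * ((1 + ε) * σ2 * k)))
          = (2 ^ (m*k) * e) * Real.exp (l * ((1 + ε) * σ2 * k)) by ring] at h1
      have hNU := le_of_mul_le_mul_right h1 (Real.exp_pos _)
      apply measure_bound AU hAUmeas
      calc ((Finset.univ.filter (fun B : Fin k → Fin m → Bool =>
            (fun i j => sgn (B i j)) ∈ AU)).card : ℝ)
          = ((Finset.univ.filter (fun B : Fin k → Fin m → Bool =>
            (1 + ε) * σ2 * k ≤ S B)).card : ℝ) := by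
            congr 1
        _ ≤ 2 ^ (m * k) * e := hNU
    -- lower tail
    have hML : radMeasure k m AL ≤ ENNReal.ofReal e := by
      set l : ℝ := ε / (6 * σ2) with hl
      have hlpos : 0 < l := by positivity
      have hlσ : l * σ2 = ε / 6 := by rw [hl]; field_simp
      have hmgf := mgf_lower X l hlpos.le
      rw [← hσ2] at hmgf
      have hcount := chernoff_count_le (f := S) (a := (1 - ε) * σ2 * k) l hlpos.le
      have hfact : ∑ B : Fin k → Fin m → Bool, Real.exp (-(l * S B))
          = (∑ b : Fin m → Bool, Real.exp (-(l * (∑ j, sgn (b j) * X j) ^ 2))) ^ k := by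
        rw [← sum_prod_pow]
        refine Finset.sum_congr rfl fun B _ => ?_
        rw [hS, Finset.mul_sum, ← Finset.sum_neg_distrib, Real.exp_sum]
      have hpow : (∑ b : Fin m → Bool, Real.exp (-(l * (∑ j, sgn (b j) * X j) ^ 2))) ^ k
          ≤ (2 ^ m * Real.exp (-(l * σ2) + 3 * l^2 * σ2^2)) ^ k :=
        pow_le_pow_left₀ (Finset.sum_nonneg fun b _ => (Real.exp_pos _).le) hmgf k
      have h1 := le_trans hcount (le_trans (le_of_eq hfact) hpow)
      have h2 : ((2:ℝ) ^ m * Real.exp (-(l * σ2) + 3 * l^2 * σ2^2)) ^ k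
          = 2 ^ (m * k) * Real.exp ((k : ℝ) * (-(l * σ2) + 3 * l^2 * σ2^2)) := by
        rw [mul_pow, ← pow_mul, ← Real.exp_nat_mul]
      rw [h2] at h1
      set e' : ℝ := Real.exp (-(1/12) * ε ^ 2 * k) with he'
      have h3 : Real.exp ((k:ℝ) * (-(l * σ2) + 3 * l^2 * σ2^2))
          = e' * Real.exp (-(l * ((1 - ε) * σ2 * k))) := by
        rw [he', ← Real.exp_add]
        congr 1
        have hl2 : 3 * l ^ 2 * σ2 ^ 2 = ε ^ 2 / 12 := by
          rw [hl]; field_simp; ring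
        have hl3 : l * ((1 - ε) * σ2 * (k:ℝ)) = ε / 6 * ((1 - ε) * k) := by
          rw [hl]; field_simp
        rw [hlσ, hl2, hl3]
        ring
      rw [h3, show (2:ℝ) ^ (m*k) * (e' * Real.exp (-(l * ((1 - ε) * σ2 * k))))
          = (2 ^ (m*k) * e') * Real.exp (-(l * ((1 - ε) * σ2 * k))) by ring] at h1
      have hNL := le_of_mul_le_mul_right h1 (Real.exp_pos _)
      have he'e : e' ≤ e := by
        rw [he', he]
        apply Real.exp_le_exp.mpr
        have hε2k : 0 ≤ ε ^ 2 * k := by positivity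
        linarith
      apply measure_bound AL hALmeas
      calc ((Finset.univ.filter (fun B : Fin k → Fin m → Bool =>
            (fun i j => sgn (B i j)) ∈ AL)).card : ℝ)
          = ((Finset.univ.filter (fun B : Fin k → Fin m → Bool =>
            S B ≤ (1 - ε) * σ2 * k)).card : ℝ) := by
            congr 1
        _ ≤ 2 ^ (m * k) * e' := hNL
        _ ≤ 2 ^ (m * k) * e := mul_le_mul_of_nonneg_left he'e (by positivity)
    -- assemble
    have hcompl : radMeasure k m Gsᶜ ≤ ENNReal.ofReal (2 * e) := by
      calc radMeasure k m Gsᶜ ≤ radMeasure k m (AU ∪ AL) := measure_mono hincl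
        _ ≤ radMeasure k m AU + radMeasure k m AL := measure_union_le _ _
        _ ≤ ENNReal.ofReal e + ENNReal.ofReal e := add_le_add hMU hML
        _ = ENNReal.ofReal (2 * e) := by
            rw [← ENNReal.ofReal_add hepos.le hepos.le]; ring_nf
    have hGeq : radMeasure k m Gs = 1 - radMeasure k m Gsᶜ := by
      have hadd := measure_add_measure_compl (μ := radMeasure k m) hGmeas
      rw [measure_univ] at hadd
      exact ENNReal.eq_sub_of_add_eq (measure_ne_top _ _) hadd
    rw [ge_iff_le, hGeq]
    calc ENNReal.ofReal (1 - 2 * Real.exp (-(1/32) * ε ^ 2 * k))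
        = ENNReal.ofReal (1 - 2 * e) := by rw [he]
      _ = 1 - ENNReal.ofReal (2 * e) := by
          rw [ENNReal.ofReal_sub _ (by positivity), ENNReal.ofReal_one]
      _ ≤ 1 - radMeasure k m Gsᶜ := tsub_le_tsub_left hcompl 1
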